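/- For the Euler eigen-frame R₁ = (1, √(−p_v), 0)ᵀ, R₂ = (−p_S, 0, p_v)ᵀ, R₃ = (1, −√(−p_v), 0)ᵀ (with p_v < 0), any scalar field of the form η(v,u,S) = C₁v + C₂u + C₃(ε(v,S) + u²/2) + H(S), where p = −ε_v, satisfies the orthogonality conditions RᵢᵀD²η Rⱼ = 0 for all i ≠ j. -/

import Mathlib

open Matrix

noncomputable def hmat {n : ℕ} (η : (Fin n → ℝ) → ℝ) (u : Fin n → ℝ) :
    Matrix (Fin n) (Fin n) ℝ :=
  Matrix.of fun i j => fderiv ℝ (fun w => fderiv ℝ η w (Pi.single i 1)) u (Pi.single j 1)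

set_option maxHeartbeats 1000000 in
/-- For the Euler eigen-frame (with `p = −ε_v`, so `−p_v = ε_vv`, `−p_S = ε_vS`),
any `η(v,u,S) = C₁v + C₂u + C₃(ε(v,S) + u²/2) + H(S)` satisfies the
orthogonality relations `RᵢᵀD²ηRⱼ = 0` for `i ≠ j`. -/
theorem stmt15 (ε : ℝ × ℝ → ℝ) (hε : ContDiff ℝ 3 ε)
    (H : ℝ → ℝ) (hH : ContDiff ℝ 2 H) (C1 C2 C3 : ℝ)
    (εvv εvS : ℝ × ℝ → ℝ)
    (hεvv : ∀ x, εvv x = fderiv ℝ (fun y => fderiv ℝ ε y (1, 0)) x (1, 0))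
    (hεvS : ∀ x, εvS x = fderiv ℝ (fun y => fderiv ℝ ε y (1, 0)) x (0, 1))
    (hpv : ∀ x, 0 < εvv x)
    (η : (Fin 3 → ℝ) → ℝ)
    (hηdef : ∀ w, η w = C1 * w 0 + C2 * w 1 + C3 * (ε (w 0, w 2) + (w 1) ^ 2 / 2) + H (w 2))
    (Rv : (Fin 3 → ℝ) → Fin 3 → Fin 3 → ℝ)
    (hRdef : ∀ w, Rv w = ![![1, Real.sqrt (εvv (w 0, w 2)), 0],
                           ![εvS (w 0, w 2), 0, -εvv (w 0, w 2)],
                           ![1, -Real.sqrt (εvv (w 0, w 2)), 0]]) :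
    ∀ w, ∀ i j : Fin 3, i ≠ j → Rv w i ⬝ᵥ (hmat η w).mulVec (Rv w j) = 0 := by
  classical
  -- basic differentiability facts
  have hεd : Differentiable ℝ ε := hε.differentiable (by norm_num)
  have hε2 : ContDiff ℝ 2 (fderiv ℝ ε) := hε.fderiv_right (by norm_num)
  have hφd : ∀ u : ℝ × ℝ, Differentiable ℝ (fun x => fderiv ℝ ε x u) := by
    intro u
    exact (ContinuousLinearMap.apply ℝ ℝ u).differentiable.comp
      (hε2.differentiable (by norm_num))
  have hHd : Differentiable ℝ H := hH.differentiable (by norm_num)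
  have hH1 : Differentiable ℝ (deriv H) := by
    have h2 : ContDiff ℝ ((1 : WithTop ℕ∞) + 1) H := by
      have e : ((1 : WithTop ℕ∞) + 1) = 2 := by norm_num
      rw [e]; exact hH
    exact ((contDiff_succ_iff_deriv.mp h2).2.2).differentiable (by norm_num)
  -- projections and the linear map w ↦ (w 0, w 2)
  set P : Fin 3 → ((Fin 3 → ℝ) →L[ℝ] ℝ) := fun i => ContinuousLinearMap.proj i with hP
  set Lm : (Fin 3 → ℝ) →L[ℝ] ℝ × ℝ := (P 0).prod (P 2) with hLm
  have hL : ∀ w : Fin 3 → ℝ, HasFDerivAt (fun w : Fin 3 → ℝ => (w 0, w 2)) Lm w :=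
    fun w => Lm.hasFDerivAt
  have hproj : ∀ (i : Fin 3) (w : Fin 3 → ℝ),
      HasFDerivAt (fun w : Fin 3 → ℝ => w i) (P i) w := fun i w => hasFDerivAt_apply i w
  -- evaluation of second derivatives / symmetry
  have heval : ∀ (x : ℝ × ℝ) (u v : ℝ × ℝ),
      fderiv ℝ (fun y => fderiv ℝ ε y u) x v = (fderiv ℝ (fderiv ℝ ε) x) v u := by
    intro x u v
    have hder2 : HasFDerivAt (fderiv ℝ ε) (fderiv ℝ (fderiv ℝ ε) x) x :=
      ((hε2.differentiable (by norm_num)) x).hasFDerivAt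
    have h : HasFDerivAt (fun y => fderiv ℝ ε y u)
        ((ContinuousLinearMap.apply ℝ ℝ u).comp (fderiv ℝ (fderiv ℝ ε) x)) x :=
      ((ContinuousLinearMap.apply ℝ ℝ u).hasFDerivAt.comp x hder2)
    rw [h.fderiv]; rfl
  have hsym : ∀ x : ℝ × ℝ,
      fderiv ℝ (fun y => fderiv ℝ ε y ((0 : ℝ), (1 : ℝ))) x (1, 0) = εvS x := by
    intro x
    have hder : ∀ y, HasFDerivAt ε (fderiv ℝ ε y) y := fun y => (hεd y).hasFDerivAt
    have hder2 : HasFDerivAt (fderiv ℝ ε) (fderiv ℝ (fderiv ℝ ε) x) x :=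
      ((hε2.differentiable (by norm_num)) x).hasFDerivAt
    have hs := second_derivative_symmetric hder hder2 ((1 : ℝ), (0 : ℝ)) ((0 : ℝ), (1 : ℝ))
    rw [heval, hεvS, heval, hs]
  -- first derivative of η
  have hηd : ∀ w : Fin 3 → ℝ, HasFDerivAt η
      (C1 • P 0 + C2 • P 1 + C3 • ((fderiv ℝ ε (w 0, w 2)).comp Lm + (w 1) • P 1)
        + deriv H (w 2) • P 2) w := by
    intro w
    have hfun : η = fun w => C1 * w 0 + C2 * w 1 + C3 * (ε (w 0, w 2) + (w 1) ^ 2 / 2)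
        + H (w 2) := funext hηdef
    rw [hfun]
    have hε' : HasFDerivAt (fun w : Fin 3 → ℝ => ε (w 0, w 2))
        ((fderiv ℝ ε (w 0, w 2)).comp Lm) w :=
      ((hεd (w 0, w 2)).hasFDerivAt).comp w (hL w)
    have hsq : HasFDerivAt (fun w : Fin 3 → ℝ => (w 1) ^ 2 / 2) ((w 1) • P 1) w := by
      have hd : HasDerivAt (fun t : ℝ => t ^ 2 / 2) (w 1) (w 1) := by
        simpa using (hasDerivAt_pow 2 (w 1)).div_const 2
      simpa [Function.comp_def] using hd.comp_hasFDerivAt w (hproj 1 w)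
    have hHc : HasFDerivAt (fun w : Fin 3 → ℝ => H (w 2)) (deriv H (w 2) • P 2) w := by
      simpa [Function.comp_def] using
        ((hHd (w 2)).hasDerivAt).comp_hasFDerivAt w (hproj 2 w)
    exact ((((hproj 0 w).const_mul C1).add ((hproj 1 w).const_mul C2)).add
      ((hε'.add hsq).const_mul C3)).add hHc
  -- first partial derivatives of η as functions
  have hg0 : (fun w : Fin 3 → ℝ => fderiv ℝ η w (Pi.single 0 1))
      = fun w => C1 + C3 * fderiv ℝ ε (w 0, w 2) (1, 0) := by
    funext w
    rw [(hηd w).fderiv]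
    simp [hLm, hP, Pi.single_apply]
  have hg1 : (fun w : Fin 3 → ℝ => fderiv ℝ η w (Pi.single 1 1))
      = fun w => C2 + C3 * w 1 := by
    funext w
    rw [(hηd w).fderiv]
    simp [hLm, hP, Pi.single_apply, Prod.mk_zero_zero]
  have hg2 : (fun w : Fin 3 → ℝ => fderiv ℝ η w (Pi.single 2 1))
      = fun w => C3 * fderiv ℝ ε (w 0, w 2) (0, 1) + deriv H (w 2) := by
    funext w
    rw [(hηd w).fderiv]
    simp [hLm, hP, Pi.single_apply]
  -- second derivatives of the rows
  have hrow0 : ∀ w : Fin 3 → ℝ,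
      HasFDerivAt (fun w : Fin 3 → ℝ => C1 + C3 * fderiv ℝ ε (w 0, w 2) (1, 0))
        (C3 • ((fderiv ℝ (fun y => fderiv ℝ ε y ((1 : ℝ), (0 : ℝ))) (w 0, w 2)).comp Lm)) w := by
    intro w
    exact ((((hφd (1, 0)) (w 0, w 2)).hasFDerivAt.comp w (hL w)).const_mul C3).const_add C1
  have hrow1 : ∀ w : Fin 3 → ℝ,
      HasFDerivAt (fun w : Fin 3 → ℝ => C2 + C3 * w 1) (C3 • P 1) w :=
    fun w => ((hproj 1 w).const_mul C3).const_add C2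
  have hrow2 : ∀ w : Fin 3 → ℝ,
      HasFDerivAt (fun w : Fin 3 → ℝ => C3 * fderiv ℝ ε (w 0, w 2) (0, 1) + deriv H (w 2))
        (C3 • ((fderiv ℝ (fun y => fderiv ℝ ε y ((0 : ℝ), (1 : ℝ))) (w 0, w 2)).comp Lm)
          + deriv (deriv H) (w 2) • P 2) w := by
    intro w
    have h1 : HasFDerivAt (fun w : Fin 3 → ℝ => C3 * fderiv ℝ ε (w 0, w 2) (0, 1))
        (C3 • ((fderiv ℝ (fun y => fderiv ℝ ε y ((0 : ℝ), (1 : ℝ))) (w 0, w 2)).comp Lm)) w :=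
      (((hφd (0, 1)) (w 0, w 2)).hasFDerivAt.comp w (hL w)).const_mul C3
    have h2 : HasFDerivAt (fun w : Fin 3 → ℝ => deriv H (w 2))
        (deriv (deriv H) (w 2) • P 2) w := by
      simpa [Function.comp_def] using
        ((hH1 (w 2)).hasDerivAt).comp_hasFDerivAt w (hproj 2 w)
    exact h1.add h2
  -- the Hessian entries
  have e00 : ∀ w : Fin 3 → ℝ, hmat η w 0 0 = C3 * εvv (w 0, w 2) := by
    intro w
    show fderiv ℝ (fun w => fderiv ℝ η w (Pi.single 0 1)) w (Pi.single 0 1) = _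
    rw [hg0, (hrow0 w).fderiv, hεvv]
    simp [hLm, hP, Pi.single_apply]
  have e01 : ∀ w : Fin 3 → ℝ, hmat η w 0 1 = 0 := by
    intro w
    show fderiv ℝ (fun w => fderiv ℝ η w (Pi.single 0 1)) w (Pi.single 1 1) = _
    rw [hg0, (hrow0 w).fderiv]
    simp [hLm, hP, Pi.single_apply, Prod.mk_zero_zero]
  have e02 : ∀ w : Fin 3 → ℝ, hmat η w 0 2 = C3 * εvS (w 0, w 2) := by
    intro w
    show fderiv ℝ (fun w => fderiv ℝ η w (Pi.single 0 1)) w (Pi.single 2 1) = _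
    rw [hg0, (hrow0 w).fderiv, hεvS]
    simp [hLm, hP, Pi.single_apply]
  have e10 : ∀ w : Fin 3 → ℝ, hmat η w 1 0 = 0 := by
    intro w
    show fderiv ℝ (fun w => fderiv ℝ η w (Pi.single 1 1)) w (Pi.single 0 1) = _
    rw [hg1, (hrow1 w).fderiv]
    simp [hP, Pi.single_apply]
  have e11 : ∀ w : Fin 3 → ℝ, hmat η w 1 1 = C3 := by
    intro w
    show fderiv ℝ (fun w => fderiv ℝ η w (Pi.single 1 1)) w (Pi.single 1 1) = _
    rw [hg1, (hrow1 w).fderiv]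
    simp [hP, Pi.single_apply]
  have e12 : ∀ w : Fin 3 → ℝ, hmat η w 1 2 = 0 := by
    intro w
    show fderiv ℝ (fun w => fderiv ℝ η w (Pi.single 1 1)) w (Pi.single 2 1) = _
    rw [hg1, (hrow1 w).fderiv]
    simp [hP, Pi.single_apply]
  have e20 : ∀ w : Fin 3 → ℝ, hmat η w 2 0 = C3 * εvS (w 0, w 2) := by
    intro w
    show fderiv ℝ (fun w => fderiv ℝ η w (Pi.single 2 1)) w (Pi.single 0 1) = _
    rw [hg2, (hrow2 w).fderiv]
    have := hsym (w 0, w 2)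
    simp [hLm, hP, Pi.single_apply, this]
  have e21 : ∀ w : Fin 3 → ℝ, hmat η w 2 1 = 0 := by
    intro w
    show fderiv ℝ (fun w => fderiv ℝ η w (Pi.single 2 1)) w (Pi.single 1 1) = _
    rw [hg2, (hrow2 w).fderiv]
    simp [hLm, hP, Pi.single_apply, Prod.mk_zero_zero]
  -- finish
  intro w i j hij
  have hs : Real.sqrt (εvv (w 0, w 2)) * Real.sqrt (εvv (w 0, w 2)) = εvv (w 0, w 2) :=
    Real.mul_self_sqrt (hpv _).le
  have expand : ∀ v u : Fin 3 → ℝ, v ⬝ᵥ (hmat η w).mulVec u =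
      v 0 * (hmat η w 0 0 * u 0 + hmat η w 0 1 * u 1 + hmat η w 0 2 * u 2)
      + v 1 * (hmat η w 1 0 * u 0 + hmat η w 1 1 * u 1 + hmat η w 1 2 * u 2)
      + v 2 * (hmat η w 2 0 * u 0 + hmat η w 2 1 * u 1 + hmat η w 2 2 * u 2) := by
    intro v u
    simp [dotProduct, Matrix.mulVec, Fin.sum_univ_three]
  rw [expand, hRdef]
  fin_cases i <;> fin_cases j <;>
    simp only [e00 w, e01 w, e02 w, e10 w, e11 w, e12 w, e20 w, e21 w,
      Fin.zero_eta, Fin.mk_one, Fin.isValue, Matrix.cons_val_zero, Matrix.cons_val_one,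
      Matrix.head_cons, Matrix.cons_val_two, Matrix.tail_cons, Fin.reduceFinMk] <;>
    first
    | exact absurd rfl hij
    | ring1
    | linear_combination (-C3) * hs
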